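/- Let σ be a strongly convex rational polyhedral cone of full dimension n in ℝⁿ, and S = σ^∨ ∩ ℤⁿ its associated semigroup. Then the set H of irreducible elements of S (nonzero m ∈ S such that m = m' + m'' with m', m'' ∈ S forces m' = 0 or m'' = 0) generates S as a monoid, and every generating set of S contains H. -/

import Mathlib

open scoped BigOperators

/-- Hilbert basis theorem for pointed full-dimensional rational cones: let `σ ⊆ ℝⁿ` be the
cone generated by a finite set `T ⊆ ℤⁿ`, strongly convex and of full dimension `n`, and let
`S = σ^∨ ∩ ℤⁿ` be the associated semigroup. Then the set `H` of irreducible elements of `S`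
generates `S` as a monoid, and every generating set of `S` contains `H`. -/
theorem hilbert_basis_of_cone (n : ℕ) (T : Finset (Fin n → ℤ))
    (C : Set (Fin n → ℝ))
    (hC : C = {x | ∃ lam : (Fin n → ℤ) → ℝ, (∀ u, 0 ≤ lam u) ∧
      x = ∑ u ∈ T, lam u • (fun i => (u i : ℝ))})
    (hsc : C ∩ (-C) = {0})
    (hfull : Submodule.span ℝ C = ⊤)
    (S : Set (Fin n → ℤ))
    (hS : S = {m | ∀ u ∈ T, 0 ≤ ∑ i, u i * m i})
    (H : Set (Fin n → ℤ))
    (hH : H = {m | m ∈ S ∧ m ≠ 0 ∧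
      ∀ m' ∈ S, ∀ m'' ∈ S, m = m' + m'' → m' = 0 ∨ m'' = 0}) :
    (∀ m ∈ S, m ∈ AddSubmonoid.closure H) ∧
    (∀ G : Set (Fin n → ℤ), G ⊆ S → (∀ m ∈ S, m ∈ AddSubmonoid.closure G) → H ⊆ G) := by
  -- S is closed under addition and contains 0
  have hS0 : (0 : Fin n → ℤ) ∈ S := by
    rw [hS]; intro u _; simp
  have hSadd : ∀ a ∈ S, ∀ b ∈ S, a + b ∈ S := by
    rw [hS]; intro a ha b hb u hu
    have := add_nonneg (ha u hu) (hb u hu)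
    simpa [Finset.sum_add_distrib, mul_add] using this
  -- the additive "degree" functional
  set N : (Fin n → ℤ) → ℤ := fun m => ∑ u ∈ T, ∑ i, u i * m i with hN
  have hNadd : ∀ a b, N (a + b) = N a + N b := by
    intro a b
    simp only [hN, ← Finset.sum_add_distrib, mul_add, Pi.add_apply]
  have hNnonneg : ∀ m ∈ S, 0 ≤ N m := by
    rw [hS]; intro m hm
    exact Finset.sum_nonneg fun u hu => hm u hu
  -- key positivity: N m = 0 on S forces m = 0
  have hkey : ∀ m ∈ S, N m = 0 → m = 0 := by
    intro m hm hNm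
    rw [hS] at hm
    have hzero : ∀ u ∈ T, ∑ i, u i * m i = 0 := by
      intro u hu
      exact (Finset.sum_eq_zero_iff_of_nonneg (fun u hu => hm u hu)).mp hNm u hu
    -- the linear functional x ↦ ∑ i, x i * m i vanishes on C
    set φ : (Fin n → ℝ) →ₗ[ℝ] ℝ :=
      ∑ i, (m i : ℝ) • LinearMap.proj i with hφ
    have hφval : ∀ x : Fin n → ℝ, φ x = ∑ i, (m i : ℝ) * x i := by
      intro x
      simp [hφ, LinearMap.sum_apply]
    have hCker : C ⊆ (LinearMap.ker φ : Set (Fin n → ℝ)) := by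
      intro x hx
      rw [hC] at hx
      obtain ⟨lam, _, rfl⟩ := hx
      simp only [SetLike.mem_coe, LinearMap.mem_ker, map_sum, map_smul]
      refine Finset.sum_eq_zero fun u hu => ?_
      have : φ (fun i => (u i : ℝ)) = 0 := by
        rw [hφval]
        have := hzero u hu
        have : ((∑ i, u i * m i : ℤ) : ℝ) = 0 := by rw [this]; simp
        push_cast at this
        rw [← this]
        exact Finset.sum_congr rfl fun i _ => mul_comm _ _
      rw [this, smul_zero]
    have hker : LinearMap.ker φ = ⊤ := by
      rw [eq_top_iff, ← hfull, Submodule.span_le]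
      exact hCker
    have hφm : φ (fun i => (m i : ℝ)) = 0 := by
      have : (fun i => (m i : ℝ)) ∈ LinearMap.ker φ := by rw [hker]; trivial
      exact this
    rw [hφval] at hφm
    have hsq : ∑ i, ((m i : ℝ))^2 = 0 := by
      rw [← hφm]; exact Finset.sum_congr rfl fun i _ => (sq _)
    funext i
    have hi := (Finset.sum_eq_zero_iff_of_nonneg
      (fun i _ => sq_nonneg ((m i : ℝ)))).mp hsq i (Finset.mem_univ i)
    have : (m i : ℝ) = 0 := by
      exact pow_eq_zero_iff (n := 2) (by norm_num) |>.mp hi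
    exact_mod_cast this
  constructor
  · -- generation: strong induction on N m
    have main : ∀ k : ℕ, ∀ m ∈ S, (N m).toNat = k → m ∈ AddSubmonoid.closure H := by
      intro k
      induction k using Nat.strong_induction_on with
      | _ k ih =>
        intro m hm hk
        by_cases h0 : m = 0
        · subst h0; exact zero_mem _
        by_cases hirr : ∀ m' ∈ S, ∀ m'' ∈ S, m = m' + m'' → m' = 0 ∨ m'' = 0
        · exact AddSubmonoid.subset_closure (by rw [hH]; exact ⟨hm, h0, hirr⟩)
        · push_neg at hirr
          obtain ⟨m', hm', m'', hm'', heq, h1, h2⟩ := hirr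
          have hN' : 0 < N m' := by
            rcases lt_or_eq_of_le (hNnonneg m' hm') with h | h
            · exact h
            · exact absurd (hkey m' hm' h.symm) h1
          have hN'' : 0 < N m'' := by
            rcases lt_or_eq_of_le (hNnonneg m'' hm'') with h | h
            · exact h
            · exact absurd (hkey m'' hm'' h.symm) h2
          have hNm : N m = N m' + N m'' := by rw [heq, hNadd]
          have hlt1 : (N m').toNat < k := by
            rw [← hk]; omega
          have hlt2 : (N m'').toNat < k := by
            rw [← hk]; omega
          have c1 := ih _ hlt1 m' hm' rfl
          have c2 := ih _ hlt2 m'' hm'' rfl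
          rw [heq]
          exact add_mem c1 c2
    intro m hm
    exact main (N m).toNat m hm rfl
  · -- minimality
    intro G hGS hGgen h hhH
    rw [hH] at hhH
    obtain ⟨hhS, hne, hirr⟩ := hhH
    obtain ⟨l, hlG, hlsum⟩ := AddSubmonoid.exists_list_of_mem_closure (hGgen h hhS)
    clear hGgen
    induction l with
    | nil => exact absurd hlsum.symm hne
    | cons a l ihl =>
      have haG : a ∈ G := hlG a List.mem_cons_self
      have hlG' : ∀ y ∈ l, y ∈ G := fun y hy => hlG y (List.mem_cons_of_mem a hy)
      have hlS : l.sum ∈ S := by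
        clear hlsum ihl hlG
        induction l with
        | nil => simpa using hS0
        | cons b t iht =>
          rw [List.sum_cons]
          exact hSadd b (hGS (hlG' b List.mem_cons_self)) t.sum
            (iht (fun y hy => hlG' y (List.mem_cons_of_mem b hy)))
      rw [List.sum_cons] at hlsum
      rcases hirr a (hGS haG) l.sum hlS hlsum.symm with h1 | h1
      · rw [h1, zero_add] at hlsum
        exact ihl hlG' hlsum
      · rw [h1, add_zero] at hlsum
        rwa [← hlsum]
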